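/- If L is a finite lattice with least element 0 and A is a nonempty antichain in L \ {0}, then A is a lattice-antichain (i.e. for all a, b in the up-set of A, the meet of a and b lies in {0} ∪ up-set of A) if and only if the poset L_A obtained by adding a new element n with n covering 0 and with covering set exactly A is again a lattice. -/

import Mathlib

namespace PaperLattice

variable {N : ℕ}

/-- Depth: one less than the maximum length of a chain from `t` down to `a` w.r.t. `le`. -/
noncomputable def dep (le : Fin N → Fin N → Prop) (t a : Fin N) : ℕ :=
  sSup {k | ∃ l : List (Fin N), List.Chain' (fun x y => le y x ∧ y ≠ x) l ∧
    l.head? = some t ∧ l.getLast? = some a ∧ l.length = k + 1}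

/-- The `d`-th level: elements of depth `d`. -/
noncomputable def lev (le : Fin N → Fin N → Prop) (t : Fin N) (d : ℕ) : Set (Fin N) :=
  {a | dep le t a = d}

/-- A labelled poset is levellised if depth is monotone in the nonzero labels. -/
def Levellised (le : Fin N → Fin N → Prop) (t : Fin N) : Prop :=
  ∀ i j : Fin N, 0 < (i : ℕ) → (i : ℕ) ≤ (j : ℕ) → dep le t i ≤ dep le t j

def lt' (le : Fin N → Fin N → Prop) (a b : Fin N) : Prop := le a b ∧ a ≠ b

/-- `b` covers `a`. -/
def CovByRel (le : Fin N → Fin N → Prop) (a b : Fin N) : Prop :=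
  lt' le a b ∧ ∀ x, lt' le a x → lt' le x b → False

/-- The covering set of `a`. -/
def cov (le : Fin N → Fin N → Prop) (a : Fin N) : Set (Fin N) := {b | CovByRel le a b}

/-- The up-set of `A`. -/
def upset (le : Fin N → Fin N → Prop) (A : Set (Fin N)) : Set (Fin N) :=
  {x | ∃ a ∈ A, le a x}

def AntichainRel (le : Fin N → Fin N → Prop) (A : Set (Fin N)) : Prop :=
  ∀ a ∈ A, ∀ b ∈ A, a ≠ b → ¬ le a b

/-- Binary weight of a set of labels. -/
noncomputable def wt (A : Set (Fin N)) : ℕ :=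
  ∑ j : Fin N, A.indicator (fun j => 2 ^ (j : ℕ)) j

/-- `z` is a bottom and `o` a top for `le`. -/
def Bounds (le : Fin N → Fin N → Prop) (z o : Fin N) : Prop :=
  (∀ a, le z a) ∧ (∀ a, le a o)

/-- The order obtained from `le` by adding `m` new atoms, the `i`-th having covering set `A i`. -/
def extLe {n m : ℕ} (le : Fin n → Fin n → Prop) (A : Fin m → Set (Fin n)) :
    Fin (n + m) → Fin (n + m) → Prop := fun x y =>
  if hx : (x : ℕ) < n then
    if hy : (y : ℕ) < n then le ⟨x, hx⟩ ⟨y, hy⟩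
    else (x : ℕ) = 0
  else
    if hy : (y : ℕ) < n then
      (⟨y, hy⟩ : Fin n) ∈ upset le (A ⟨(x : ℕ) - n, by have := x.isLt; omega⟩)
    else x = y

/-- The relabelled order `π(L)`. -/
def permLe {n : ℕ} (π : Equiv.Perm (Fin n)) (le : Fin n → Fin n → Prop) :
    Fin n → Fin n → Prop := fun a b => le (π.symm a) (π.symm b)



section Stmt0Aux

variable {n : ℕ}

lemma fin_cs_or_last (x : Fin (n + 1)) :
    (∃ a : Fin n, x = a.castSucc) ∨ x = Fin.last n :=
  Fin.lastCases (Or.inr rfl) (fun a => Or.inl ⟨a, rfl⟩) x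

lemma extLe_cc (L : Lattice (Fin n)) (A : Set (Fin n)) (a b : Fin n) :
    extLe L.le (fun _ : Fin 1 => A) a.castSucc b.castSucc ↔ L.le a b := by
  simp [extLe, a.isLt, b.isLt]

lemma extLe_cl (L : Lattice (Fin n)) (A : Set (Fin n)) (a : Fin n) :
    extLe L.le (fun _ : Fin 1 => A) a.castSucc (Fin.last n) ↔ (a : ℕ) = 0 := by
  simp [extLe, a.isLt]

lemma extLe_lc (L : Lattice (Fin n)) (A : Set (Fin n)) (b : Fin n) :
    extLe L.le (fun _ : Fin 1 => A) (Fin.last n) b.castSucc ↔ b ∈ upset L.le A := by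
  simp [extLe, b.isLt]

lemma extLe_ll (L : Lattice (Fin n)) (A : Set (Fin n)) :
    extLe L.le (fun _ : Fin 1 => A) (Fin.last n) (Fin.last n) := by
  simp [extLe]

lemma upset_up (L : Lattice (Fin n)) (A : Set (Fin n)) {x y : Fin n}
    (hx : x ∈ upset L.le A) (hxy : L.le x y) :
    y ∈ upset L.le A := by
  obtain ⟨a, ha, hax⟩ := hx
  exact ⟨a, ha, L.le_trans _ _ _ hax hxy⟩

lemma upset_ne0 (hn : 2 ≤ n) (L : Lattice (Fin n))
    (hb : Bounds L.le ⟨0, by linarith⟩ ⟨1, by linarith⟩)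
    (A : Set (Fin n)) (h0 : ∀ a ∈ A, a ≠ ⟨0, by linarith⟩)
    {x : Fin n} (hx : x ∈ upset L.le A) : (x : ℕ) ≠ 0 := by
  intro h
  obtain ⟨a, ha, hax⟩ := hx
  have hx0 : x = (⟨0, by linarith⟩ : Fin n) := Fin.ext h
  have : a = (⟨0, by linarith⟩ : Fin n) := by
    apply L.le_antisymm
    · rw [hx0] at hax; exact hax
    · exact hb.1 a
  exact h0 a ha this

open Classical in
noncomputable def newInf (hn : 2 ≤ n) (L : Lattice (Fin n)) (A : Set (Fin n)) :
    Fin (n + 1) → Fin (n + 1) → Fin (n + 1) := fun x y =>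
  if hx : (x : ℕ) < n then
    if hy : (y : ℕ) < n then
      if (⟨x, hx⟩ : Fin n) ∈ upset L.le A ∧ (⟨y, hy⟩ : Fin n) ∈ upset L.le A ∧
          L.inf ⟨x, hx⟩ ⟨y, hy⟩ = ⟨0, by linarith⟩ then Fin.last n
      else Fin.castSucc (L.inf ⟨x, hx⟩ ⟨y, hy⟩)
    else if (⟨x, hx⟩ : Fin n) ∈ upset L.le A then Fin.last n
      else Fin.castSucc ⟨0, by linarith⟩
  else
    if hy : (y : ℕ) < n then
      (if (⟨y, hy⟩ : Fin n) ∈ upset L.le A then Fin.last n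
        else Fin.castSucc ⟨0, by linarith⟩)
    else Fin.last n

open Classical in
lemma newInf_cc (hn : 2 ≤ n) (L : Lattice (Fin n)) (A : Set (Fin n)) (a b : Fin n) :
    newInf hn L A a.castSucc b.castSucc =
      if a ∈ upset L.le A ∧ b ∈ upset L.le A ∧ L.inf a b = ⟨0, by linarith⟩
      then Fin.last n else Fin.castSucc (L.inf a b) := by
  simp [newInf, a.isLt, b.isLt]

open Classical in
lemma newInf_cl (hn : 2 ≤ n) (L : Lattice (Fin n)) (A : Set (Fin n)) (a : Fin n) :
    newInf hn L A a.castSucc (Fin.last n) =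
      if a ∈ upset L.le A then Fin.last n else Fin.castSucc ⟨0, by linarith⟩ := by
  simp [newInf, a.isLt]

open Classical in
lemma newInf_lc (hn : 2 ≤ n) (L : Lattice (Fin n)) (A : Set (Fin n)) (b : Fin n) :
    newInf hn L A (Fin.last n) b.castSucc =
      if b ∈ upset L.le A then Fin.last n else Fin.castSucc ⟨0, by linarith⟩ := by
  simp [newInf, b.isLt]

lemma newInf_ll (hn : 2 ≤ n) (L : Lattice (Fin n)) (A : Set (Fin n)) :
    newInf hn L A (Fin.last n) (Fin.last n) = Fin.last n := by
  simp [newInf]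

lemma E_refl (L : Lattice (Fin n)) (A : Set (Fin n)) (x : Fin (n + 1)) :
    extLe L.le (fun _ : Fin 1 => A) x x := by
  rcases fin_cs_or_last x with ⟨a, rfl⟩ | rfl
  · exact (extLe_cc L A a a).mpr (L.le_refl a)
  · exact extLe_ll L A

lemma E_trans (hn : 2 ≤ n) (L : Lattice (Fin n))
    (hb : Bounds L.le ⟨0, by linarith⟩ ⟨1, by linarith⟩)
    (A : Set (Fin n)) (h0 : ∀ a ∈ A, a ≠ ⟨0, by linarith⟩)
    (x y z : Fin (n + 1)) (hxy : extLe L.le (fun _ : Fin 1 => A) x y)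
    (hyz : extLe L.le (fun _ : Fin 1 => A) y z) :
    extLe L.le (fun _ : Fin 1 => A) x z := by
  rcases fin_cs_or_last x with ⟨a, rfl⟩ | rfl <;>
    rcases fin_cs_or_last y with ⟨b, rfl⟩ | rfl <;>
    rcases fin_cs_or_last z with ⟨c, rfl⟩ | rfl
  · rw [extLe_cc] at hxy hyz ⊢
    exact L.le_trans _ _ _ hxy hyz
  · rw [extLe_cc] at hxy; rw [extLe_cl] at hyz ⊢
    have hb0 : b = (⟨0, by linarith⟩ : Fin n) := Fin.ext hyz
    rw [hb0] at hxy
    have ha0 : a = (⟨0, by linarith⟩ : Fin n) := L.le_antisymm _ _ hxy (hb.1 a)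
    rw [ha0]
  · rw [extLe_cl] at hxy; rw [extLe_lc] at hyz; rw [extLe_cc]
    have ha0 : a = (⟨0, by linarith⟩ : Fin n) := Fin.ext hxy
    rw [ha0]; exact hb.1 c
  · exact hxy
  · rw [extLe_lc] at hxy; rw [extLe_cc] at hyz; rw [extLe_lc]
    exact upset_up L A hxy hyz
  · rw [extLe_lc] at hxy; rw [extLe_cl] at hyz
    exact absurd hyz (upset_ne0 hn L hb A h0 hxy)
  · rw [extLe_lc] at hyz ⊢; exact hyz
  · exact extLe_ll L A

lemma E_antisymm (hn : 2 ≤ n) (L : Lattice (Fin n))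
    (hb : Bounds L.le ⟨0, by linarith⟩ ⟨1, by linarith⟩)
    (A : Set (Fin n)) (h0 : ∀ a ∈ A, a ≠ ⟨0, by linarith⟩)
    (x y : Fin (n + 1)) (hxy : extLe L.le (fun _ : Fin 1 => A) x y)
    (hyx : extLe L.le (fun _ : Fin 1 => A) y x) : x = y := by
  rcases fin_cs_or_last x with ⟨a, rfl⟩ | rfl <;>
    rcases fin_cs_or_last y with ⟨b, rfl⟩ | rfl
  · rw [extLe_cc] at hxy hyx
    have hab : a = b := L.le_antisymm _ _ hxy hyx
    rw [hab]
  · rw [extLe_cl] at hxy; rw [extLe_lc] at hyx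
    exact absurd hxy (upset_ne0 hn L hb A h0 hyx)
  · rw [extLe_cl] at hyx; rw [extLe_lc] at hxy
    exact absurd hyx (upset_ne0 hn L hb A h0 hxy)
  · rfl

lemma E_top (hn : 2 ≤ n) (L : Lattice (Fin n))
    (hb : Bounds L.le ⟨0, by linarith⟩ ⟨1, by linarith⟩)
    (A : Set (Fin n)) (hne : A.Nonempty) (x : Fin (n + 1)) :
    extLe L.le (fun _ : Fin 1 => A) x (Fin.castSucc ⟨1, by linarith⟩) := by
  rcases fin_cs_or_last x with ⟨a, rfl⟩ | rfl
  · exact (extLe_cc L A _ _).mpr (hb.2 a)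
  · rw [extLe_lc]
    obtain ⟨a, ha⟩ := hne
    exact ⟨a, ha, hb.2 a⟩

lemma E_inf_le_left (hn : 2 ≤ n) (L : Lattice (Fin n))
    (hb : Bounds L.le ⟨0, by linarith⟩ ⟨1, by linarith⟩)
    (A : Set (Fin n)) (x y : Fin (n + 1)) :
    extLe L.le (fun _ : Fin 1 => A) (newInf hn L A x y) x := by
  rcases fin_cs_or_last x with ⟨a, rfl⟩ | rfl <;>
    rcases fin_cs_or_last y with ⟨b, rfl⟩ | rfl
  · rw [newInf_cc]
    split_ifs with h
    · exact (extLe_lc L A a).mpr h.1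
    · exact (extLe_cc L A _ _).mpr (L.inf_le_left a b)
  · rw [newInf_cl]
    split_ifs with h
    · exact (extLe_lc L A a).mpr h
    · exact (extLe_cc L A _ _).mpr (hb.1 a)
  · rw [newInf_lc]
    split_ifs with h
    · exact extLe_ll L A
    · exact (extLe_cl L A _).mpr rfl
  · rw [newInf_ll]; exact extLe_ll L A

lemma E_inf_le_right (hn : 2 ≤ n) (L : Lattice (Fin n))
    (hb : Bounds L.le ⟨0, by linarith⟩ ⟨1, by linarith⟩)
    (A : Set (Fin n)) (x y : Fin (n + 1)) :
    extLe L.le (fun _ : Fin 1 => A) (newInf hn L A x y) y := by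
  rcases fin_cs_or_last x with ⟨a, rfl⟩ | rfl <;>
    rcases fin_cs_or_last y with ⟨b, rfl⟩ | rfl
  · rw [newInf_cc]
    split_ifs with h
    · exact (extLe_lc L A b).mpr h.2.1
    · exact (extLe_cc L A _ _).mpr (L.inf_le_right a b)
  · rw [newInf_cl]
    split_ifs with h
    · exact extLe_ll L A
    · exact (extLe_cl L A _).mpr rfl
  · rw [newInf_lc]
    split_ifs with h
    · exact (extLe_lc L A b).mpr h
    · exact (extLe_cc L A _ _).mpr (hb.1 b)
  · rw [newInf_ll]; exact extLe_ll L A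

lemma E_le_inf (hn : 2 ≤ n) (L : Lattice (Fin n))
    (hb : Bounds L.le ⟨0, by linarith⟩ ⟨1, by linarith⟩)
    (A : Set (Fin n))
    (hmeet : ∀ a ∈ upset L.le A, ∀ b ∈ upset L.le A,
      L.inf a b = ⟨0, by linarith⟩ ∨ L.inf a b ∈ upset L.le A)
    (w x y : Fin (n + 1)) (hwx : extLe L.le (fun _ : Fin 1 => A) w x)
    (hwy : extLe L.le (fun _ : Fin 1 => A) w y) :
    extLe L.le (fun _ : Fin 1 => A) w (newInf hn L A x y) := by
  rcases fin_cs_or_last x with ⟨a, rfl⟩ | rfl <;>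
    rcases fin_cs_or_last y with ⟨b, rfl⟩ | rfl
  · rw [newInf_cc]
    split_ifs with h
    · rcases fin_cs_or_last w with ⟨c, rfl⟩ | rfl
      · rw [extLe_cc] at hwx hwy
        rw [extLe_cl]
        have h1 : L.le c (L.inf a b) := L.le_inf _ _ _ hwx hwy
        rw [h.2.2] at h1
        have hc0 : c = (⟨0, by linarith⟩ : Fin n) := L.le_antisymm _ _ h1 (hb.1 c)
        rw [hc0]
      · exact extLe_ll L A
    · rcases fin_cs_or_last w with ⟨c, rfl⟩ | rfl
      · rw [extLe_cc] at hwx hwy ⊢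
        exact L.le_inf _ _ _ hwx hwy
      · rw [extLe_lc] at hwx hwy ⊢
        rcases hmeet a hwx b hwy with h1 | h1
        · exact absurd ⟨hwx, hwy, h1⟩ h
        · exact h1
  · rw [newInf_cl]
    split_ifs with h
    · rcases fin_cs_or_last w with ⟨c, rfl⟩ | rfl
      · rw [extLe_cl] at hwy ⊢; exact hwy
      · exact extLe_ll L A
    · rcases fin_cs_or_last w with ⟨c, rfl⟩ | rfl
      · rw [extLe_cl] at hwy
        rw [extLe_cc]
        have hc0 : c = (⟨0, by linarith⟩ : Fin n) := Fin.ext hwy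
        rw [hc0]; exact L.le_refl _
      · rw [extLe_lc] at hwx
        exact absurd hwx h
  · rw [newInf_lc]
    split_ifs with h
    · rcases fin_cs_or_last w with ⟨c, rfl⟩ | rfl
      · rw [extLe_cl] at hwx ⊢; exact hwx
      · exact extLe_ll L A
    · rcases fin_cs_or_last w with ⟨c, rfl⟩ | rfl
      · rw [extLe_cl] at hwx
        rw [extLe_cc]
        have hc0 : c = (⟨0, by linarith⟩ : Fin n) := Fin.ext hwx
        rw [hc0]; exact L.le_refl _
      · rw [extLe_lc] at hwy
        exact absurd hwy h
  · rw [newInf_ll]; exact hwx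

/-- The semilattice-inf structure on `Fin (n+1)` with order `extLe`. -/
noncomputable def theSemi (hn : 2 ≤ n) (L : Lattice (Fin n))
    (hb : Bounds L.le ⟨0, by linarith⟩ ⟨1, by linarith⟩)
    (A : Set (Fin n)) (h0 : ∀ a ∈ A, a ≠ ⟨0, by linarith⟩)
    (hmeet : ∀ a ∈ upset L.le A, ∀ b ∈ upset L.le A,
      L.inf a b = ⟨0, by linarith⟩ ∨ L.inf a b ∈ upset L.le A) :
    SemilatticeInf (Fin (n + 1)) where
  le := extLe L.le (fun _ : Fin 1 => A)
  lt := fun x y => extLe L.le (fun _ : Fin 1 => A) x y ∧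
    ¬ extLe L.le (fun _ : Fin 1 => A) y x
  lt_iff_le_not_ge := fun _ _ => Iff.rfl
  le_refl := E_refl L A
  le_trans := E_trans hn L hb A h0
  le_antisymm := E_antisymm hn L hb A h0
  inf := newInf hn L A
  inf_le_left := E_inf_le_left hn L hb A
  inf_le_right := E_inf_le_right hn L hb A
  le_inf := fun x y z => E_le_inf hn L hb A hmeet x y z

open Classical in
noncomputable def theLat (hn : 2 ≤ n) (L : Lattice (Fin n))
    (hb : Bounds L.le ⟨0, by linarith⟩ ⟨1, by linarith⟩)
    (A : Set (Fin n)) (hne : A.Nonempty) (h0 : ∀ a ∈ A, a ≠ ⟨0, by linarith⟩)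
    (hmeet : ∀ a ∈ upset L.le A, ∀ b ∈ upset L.le A,
      L.inf a b = ⟨0, by linarith⟩ ∨ L.inf a b ∈ upset L.le A) :
    Lattice (Fin (n + 1)) :=
  letI S : SemilatticeInf (Fin (n + 1)) := theSemi hn L hb A h0 hmeet
  { le := extLe L.le (fun _ : Fin 1 => A)
    lt := fun x y => extLe L.le (fun _ : Fin 1 => A) x y ∧
      ¬ extLe L.le (fun _ : Fin 1 => A) y x
    lt_iff_le_not_ge := fun _ _ => Iff.rfl
    le_refl := E_refl L A
    le_trans := E_trans hn L hb A h0
    le_antisymm := E_antisymm hn L hb A h0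
    inf := newInf hn L A
    inf_le_left := E_inf_le_left hn L hb A
    inf_le_right := E_inf_le_right hn L hb A
    le_inf := fun x y z => E_le_inf hn L hb A hmeet x y z
    sup := fun x y =>
      @Finset.inf' _ _ S
        (Finset.univ.filter (fun u => extLe L.le (fun _ : Fin 1 => A) x u ∧
          extLe L.le (fun _ : Fin 1 => A) y u))
        ⟨Fin.castSucc ⟨1, by linarith⟩, by
          simp only [Finset.mem_filter, Finset.mem_univ, true_and]
          exact ⟨E_top hn L hb A hne x, E_top hn L hb A hne y⟩⟩ id
    le_sup_left := fun x y =>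
      @Finset.le_inf' _ _ S _ _ _ _ (fun u hu => ((Finset.mem_filter.mp hu).2).1)
    le_sup_right := fun x y =>
      @Finset.le_inf' _ _ S _ _ _ _ (fun u hu => ((Finset.mem_filter.mp hu).2).2)
    sup_le := fun x y u h1 h2 =>
      @Finset.inf'_le _ _ S _ _ _ (Finset.mem_filter.mpr ⟨Finset.mem_univ u, h1, h2⟩) }

lemma theLat_le (hn : 2 ≤ n) (L : Lattice (Fin n))
    (hb : Bounds L.le ⟨0, by linarith⟩ ⟨1, by linarith⟩)
    (A : Set (Fin n)) (hne : A.Nonempty) (h0 : ∀ a ∈ A, a ≠ ⟨0, by linarith⟩)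
    (hmeet : ∀ a ∈ upset L.le A, ∀ b ∈ upset L.le A,
      L.inf a b = ⟨0, by linarith⟩ ∨ L.inf a b ∈ upset L.le A)
    (x y : Fin (n + 1)) :
    (theLat hn L hb A hne h0 hmeet).le x y ↔ extLe L.le (fun _ : Fin 1 => A) x y :=
  Iff.rfl

end Stmt0Aux

/-- `A` is a lattice-antichain iff the poset `L_A` obtained by adding a new
atom `n` with covering set `A` is again a lattice. -/
theorem statement0 {n : ℕ} (hn : 2 ≤ n) (L : Lattice (Fin n))
    (hb : Bounds L.le ⟨0, by omega⟩ ⟨1, by omega⟩)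
    (A : Set (Fin n)) (hne : A.Nonempty)
    (h0 : ∀ a ∈ A, a ≠ ⟨0, by omega⟩)
    (hanti : AntichainRel L.le A) :
    (∀ a ∈ upset L.le A, ∀ b ∈ upset L.le A,
        L.inf a b = ⟨0, by omega⟩ ∨ L.inf a b ∈ upset L.le A) ↔
      ∃ M : Lattice (Fin (n + 1)),
        ∀ x y, M.le x y ↔ extLe L.le (fun _ : Fin 1 => A) x y := by
  constructor
  · intro hmeet
    exact ⟨theLat hn L hb A hne h0 hmeet, theLat_le hn L hb A hne h0 hmeet⟩
  · rintro ⟨M, hM⟩ a ha b hbb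
    set m := M.inf a.castSucc b.castSucc with hm
    have hm1 : L.le (L.inf a b) a := L.inf_le_left a b
    have hm2 : L.le (L.inf a b) b := L.inf_le_right a b
    have hlb : M.le (Fin.castSucc (L.inf a b)) m :=
      M.le_inf _ _ _ ((hM _ _).mpr ((extLe_cc L A _ _).mpr hm1))
        ((hM _ _).mpr ((extLe_cc L A _ _).mpr hm2))
    have hnu : M.le (Fin.last n) m :=
      M.le_inf _ _ _ ((hM _ _).mpr ((extLe_lc L A a).mpr ha))
        ((hM _ _).mpr ((extLe_lc L A b).mpr hbb))
    have hml : M.le m a.castSucc := M.inf_le_left _ _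
    have hmr : M.le m b.castSucc := M.inf_le_right _ _
    rcases fin_cs_or_last m with ⟨c, hc⟩ | hc
    · right
      rw [hc] at hnu hml hmr hlb
      have hcA : c ∈ upset L.le A := (extLe_lc L A c).mp ((hM _ _).mp hnu)
      have hca : L.le c a := (extLe_cc L A c a).mp ((hM _ _).mp hml)
      have hcb : L.le c b := (extLe_cc L A c b).mp ((hM _ _).mp hmr)
      have h1 : L.le (L.inf a b) c := (extLe_cc L A _ c).mp ((hM _ _).mp hlb)
      have h2 : L.le c (L.inf a b) := L.le_inf _ _ _ hca hcb
      have : L.inf a b = c := L.le_antisymm _ _ h1 h2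
      rw [this]; exact hcA
    · left
      rw [hc] at hlb
      have : (L.inf a b : ℕ) = 0 := (extLe_cl L A _).mp ((hM _ _).mp hlb)
      exact Fin.ext this

end PaperLattice
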